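/- arXiv:1912.03862 — 2 statements merged into one kernel-verified Lean document; each statement's English description precedes it below -/
import Mathlib

section
/- Every 2-connected multigraph G satisfying (♥)_2 other than the 2-cycle C_2 is a simple graph, i.e. has no parallel edges. -/
open scoped Classical

noncomputable section

/-- A finite multigraph: finite vertex and edge types, each edge has an unordered
pair of endpoints. -/
structure Multigraph where
  V : Type
  E : Type
  [fintypeV : Fintype V]
  [fintypeE : Fintype E]
  [decV : DecidableEq V]
  [decE : DecidableEq E]
  ends : E → Sym2 V

attribute [instance] Multigraph.fintypeV Multigraph.fintypeE Multigraph.decV Multigraph.decE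

namespace Multigraph

variable (G : Multigraph)

/-- One step along an allowed edge between allowed vertices. -/
def Step (S : Set G.V) (A : Set G.E) (x y : G.V) : Prop :=
  x ∈ S ∧ y ∈ S ∧ ∃ e ∈ A, G.ends e = s(x, y)

/-- Reachability using vertices in `S` and edges in `A`. -/
def Reach (S : Set G.V) (A : Set G.E) : G.V → G.V → Prop :=
  Relation.ReflTransGen (G.Step S A)

/-- The (sub)graph with vertices `S` and edges `A` is connected. -/
def ConnectedOn (S : Set G.V) (A : Set G.E) : Prop :=
  S.Nonempty ∧ ∀ x ∈ S, ∀ y ∈ S, G.Reach S A x y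

/-- The (sub)graph with vertices `S` and edges `A` is 2-connected: at least two
vertices, connected, and removing any vertex keeps it connected. -/
def TwoConnectedOn (S : Set G.V) (A : Set G.E) : Prop :=
  2 ≤ Nat.card S ∧ G.ConnectedOn S A ∧ ∀ v ∈ S, G.ConnectedOn (S \ {v}) A

def Connected : Prop := G.ConnectedOn Set.univ Set.univ

def TwoConnected : Prop := G.TwoConnectedOn Set.univ Set.univ

/-- The weight function: weight 1 if deleting the edge preserves 2-connectivity,
and `δ - 1` otherwise (in particular when contracting it preserves 2-connectivity). -/
def w (δ : ℕ) (e : G.E) : ℕ :=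
  if G.TwoConnectedOn Set.univ {e}ᶜ then 1 else δ - 1

def wSum (δ : ℕ) (F : Finset G.E) : ℕ := ∑ e ∈ F, G.w δ e

/-- `E(S)`: the edges with both endpoints in `S`. -/
def edgesIn (S : Finset G.V) : Finset G.E :=
  Finset.univ.filter fun e => ∀ v ∈ G.ends e, v ∈ S

/-- Contraction of (the edges inside) a vertex subset `S` to a single vertex
(the vertex `none`); edges entirely inside `S` are removed. -/
def contract (S : Finset G.V) : Multigraph where
  V := Option {x : G.V // x ∉ S}
  E := {e : G.E // ¬ ∀ v ∈ G.ends e, v ∈ S}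
  ends e := (G.ends e.1).map fun x => if h : x ∈ S then none else some ⟨x, h⟩

/-- A good flat: a proper vertex subset whose induced restriction and whose
contraction are both 2-connected. -/
def GoodFlat (S : Finset G.V) : Prop :=
  S ⊂ Finset.univ ∧ G.TwoConnectedOn ↑S Set.univ ∧ (G.contract S).TwoConnected

/-- The number of blocks (maximal 2-connected vertex subsets). -/
def blockCount : ℕ :=
  Nat.card {S : Finset G.V // Maximal (fun T => G.TwoConnectedOn ↑T Set.univ) S}

/-- `k(S)`: the number of 2-connected components of `G/G|_S`. -/
def k (S : Finset G.V) : ℕ := (G.contract S).blockCount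

/-- Condition `(♠)_δ`. -/
def Spade (δ : ℕ) : Prop :=
  G.wSum δ Finset.univ = δ * (Fintype.card G.V - 1) ∧
  ∀ S : Finset G.V, G.GoodFlat S → G.wSum δ (G.edgesIn S) + 1 = δ * (S.card - 1)

/-- Condition `(♥)_δ`. -/
def Heart (δ : ℕ) : Prop :=
  ∀ S : Finset G.V, G.TwoConnectedOn ↑S Set.univ →
    G.wSum δ (G.edgesIn S) + G.k S = δ * (S.card - 1)

/-- A spanning tree: a connected spanning edge set of the right cardinality. -/
def IsSpanningTree (B : Finset G.E) : Prop :=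
  G.ConnectedOn Set.univ ↑B ∧ B.card = Fintype.card G.V - 1

/-- The base polytope of the graphic matroid of `G`: the convex hull of the
indicator vectors of spanning trees. -/
def basePolytope : Set (G.E → ℝ) :=
  convexHull ℝ
    {x | ∃ B : Finset G.E, G.IsSpanningTree B ∧ x = fun e => if e ∈ B then (1 : ℝ) else 0}

/-- The vertices touched by an edge set. -/
def touched (C : Finset G.E) : Finset G.V :=
  Finset.univ.filter fun v => ∃ e ∈ C, v ∈ G.ends e

/-- A forest (independent set of the graphic matroid): every nonempty subset has
fewer edges than touched vertices. -/
def IsForest (B : Finset G.E) : Prop :=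
  ∀ C ⊆ B, C.Nonempty → C.card < (G.touched C).card

/-- Isomorphism of multigraphs. -/
def IsIsomorphic (G H : Multigraph) : Prop :=
  ∃ (f : G.V ≃ H.V) (g : G.E ≃ H.E), ∀ e, H.ends (g e) = (G.ends e).map f

/-- How `G₂`'s vertices embed into the δ-gluing: `u₂ ↦ u₁`, `v₂ ↦ v₁`. -/
def glueVertexMap (G1 G2 : Multigraph) (u1 v1 : G1.V) (u2 v2 : G2.V) :
    G2.V → G1.V ⊕ {x : G2.V // x ≠ u2 ∧ x ≠ v2} := fun x =>
  if h : x = u2 then Sum.inl u1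
  else if h' : x = v2 then Sum.inl v1
  else Sum.inr ⟨x, h, h'⟩

/-- The δ-gluing of `G₁` and `G₂` along parallel classes `F₁` (between `u₁,v₁`)
and `F₂` (between `u₂,v₂`): identify `u₁ ~ u₂` and `v₁ ~ v₂` and replace
`F₁ ∪ F₂` by `w(F₁) + w(F₂) - δ` parallel edges. -/
def glue (δ : ℕ) (G1 G2 : Multigraph) (u1 v1 : G1.V) (u2 v2 : G2.V)
    (F1 : Finset G1.E) (F2 : Finset G2.E) : Multigraph where
  V := G1.V ⊕ {x : G2.V // x ≠ u2 ∧ x ≠ v2}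
  E := {e : G1.E // e ∉ F1} ⊕ {e : G2.E // e ∉ F2} ⊕
    Fin (G1.wSum δ F1 + G2.wSum δ F2 - δ)
  ends := fun e => match e with
    | Sum.inl e => (G1.ends e.1).map Sum.inl
    | Sum.inr (Sum.inl e) => (G2.ends e.1).map (glueVertexMap G1 G2 u1 v1 u2 v2)
    | Sum.inr (Sum.inr _) => s(Sum.inl u1, Sum.inl v1)

/-- The hypotheses of the δ-gluing construction. -/
def GlueHyp (δ : ℕ) (G1 G2 : Multigraph) (u1 v1 : G1.V) (u2 v2 : G2.V)
    (F1 : Finset G1.E) (F2 : Finset G2.E) : Prop :=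
  2 ≤ δ ∧ G1.TwoConnected ∧ G2.TwoConnected ∧ u1 ≠ v1 ∧ u2 ≠ v2 ∧
  F1.Nonempty ∧ F2.Nonempty ∧
  (∀ e ∈ F1, G1.ends e = s(u1, v1)) ∧ (∀ e ∈ F2, G2.ends e = s(u2, v2))

/-- The `i`-th vertex on the subdivision path (`i = 0` is `u`, `i = k` is `v`). -/
def subdividePoint (G : Multigraph) (u v : G.V) (k : ℕ) (i : ℕ) : G.V ⊕ Fin (k - 1) :=
  if i = 0 then Sum.inl u
  else if h : i - 1 < k - 1 then Sum.inr ⟨i - 1, h⟩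
  else Sum.inl v

/-- Replace the edge `e` (with endpoints `u, v`) by a path of `k` edges through
`k - 1` new interior vertices of degree 2. -/
def subdivide (G : Multigraph) (e : G.E) (u v : G.V) (k : ℕ) : Multigraph where
  V := G.V ⊕ Fin (k - 1)
  E := {f : G.E // f ≠ e} ⊕ Fin k
  ends := fun f => match f with
    | Sum.inl f => (G.ends f.1).map Sum.inl
    | Sum.inr i => s(G.subdividePoint u v k i.1, G.subdividePoint u v k (i.1 + 1))

end Multigraph

/-- The cycle multigraph `C_n`. -/
def cycleGraph (n : ℕ) : Multigraph where
  V := Fin n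
  E := Fin n
  ends i := s(i, finRotate n i)

/-- The loop-free multigraph on two vertices with `n` parallel edges. -/
def bouquet (n : ℕ) : Multigraph where
  V := Fin 2
  E := Fin n
  ends _ := s(0, 1)

/-- The complete graph `K₄`. -/
def K4 : Multigraph where
  V := Fin 4
  E := {p : Sym2 (Fin 4) // ¬p.IsDiag}
  ends p := p.1



namespace Multigraph

variable {G : Multigraph}

lemma w_two (e : G.E) : G.w 2 e = 1 := by
  unfold w; split <;> rfl

lemma wSum_two (F : Finset G.E) : G.wSum 2 F = F.card := by
  unfold wSum; simp [w_two]

lemma mem_edgesIn {S : Finset G.V} {e : G.E} :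
    e ∈ G.edgesIn S ↔ ∀ v ∈ G.ends e, v ∈ S := by
  unfold edgesIn; simp

lemma twoConnectedOn_pair {u v : G.V} (huv : u ≠ v) (g : G.E)
    (hg : G.ends g = s(u, v)) :
    G.TwoConnectedOn ↑({u, v} : Finset G.V) Set.univ := by
  have hmem : ∀ x : G.V, x ∈ (↑({u, v} : Finset G.V) : Set G.V) ↔ x = u ∨ x = v := by
    intro x; simp
  refine ⟨?_, ⟨⟨u, by simp⟩, ?_⟩, ?_⟩
  · rw [Nat.card_coe_set_eq, Set.ncard_coe_finset, Finset.card_pair huv]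
  · intro x hx y hy
    have hsuv : G.Step ↑({u, v} : Finset G.V) Set.univ u v :=
      ⟨by simp, by simp, g, Set.mem_univ g, hg⟩
    have hsvu : G.Step ↑({u, v} : Finset G.V) Set.univ v u :=
      ⟨by simp, by simp, g, Set.mem_univ g, by rw [hg, Sym2.eq_swap]⟩
    rcases (hmem x).1 hx with rfl | rfl <;> rcases (hmem y).1 hy with rfl | rfl
    · exact Relation.ReflTransGen.refl
    · exact Relation.ReflTransGen.single hsuv
    · exact Relation.ReflTransGen.single hsvu
    · exact Relation.ReflTransGen.refl
  · intro x hx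
    have hx' := (hmem x).1 hx
    constructor
    · rcases hx' with rfl | rfl
      · exact ⟨v, (hmem v).2 (Or.inr rfl), fun h => huv (Set.mem_singleton_iff.1 h).symm⟩
      · exact ⟨u, (hmem u).2 (Or.inl rfl), fun h => huv (Set.mem_singleton_iff.1 h)⟩
    · intro a ha b hb
      have hab : a = b := by
        have ha1 := (hmem a).1 ha.1
        have ha2 : a ≠ x := fun h => ha.2 (Set.mem_singleton_iff.2 h)
        have hb1 := (hmem b).1 hb.1
        have hb2 : b ≠ x := fun h => hb.2 (Set.mem_singleton_iff.2 h)
        rcases hx' with rfl | rfl <;> rcases ha1 with rfl | rfl <;>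
          rcases hb1 with rfl | rfl <;> tauto
      subst hab
      exact Relation.ReflTransGen.refl

lemma exists_crossing (hconn : G.Connected) (S : Finset G.V)
    {a b : G.V} (ha : a ∈ S) (hb : b ∉ S) :
    ∃ (g : G.E) (x y : G.V), G.ends g = s(x, y) ∧ x ∈ S ∧ y ∉ S := by
  have hr : G.Reach Set.univ Set.univ a b := hconn.2 a trivial b trivial
  revert hb
  induction hr with
  | refl => intro hb; exact absurd ha hb
  | @tail m c h1 h2 ih =>
    intro hc
    by_cases hm : m ∈ S
    · obtain ⟨-, -, g, -, hg⟩ := h2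
      exact ⟨g, m, c, hg, hm, hc⟩
    · exact ih hm

lemma one_le_blockCount (H : Multigraph) (T : Finset H.V)
    (hT : H.TwoConnectedOn ↑T Set.univ) : 1 ≤ H.blockCount := by
  have hs : (Finset.univ.filter fun T : Finset H.V =>
      H.TwoConnectedOn ↑T Set.univ).Nonempty := ⟨T, by simp [hT]⟩
  obtain ⟨m, hm, hmax⟩ : ∃ m ∈ (Finset.univ.filter fun T : Finset H.V =>
      H.TwoConnectedOn ↑T Set.univ), ∀ x ∈ (Finset.univ.filter fun T : Finset H.V =>
      H.TwoConnectedOn ↑T Set.univ), ¬ m < x := by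
    obtain ⟨m, hm, hmax⟩ := Finset.exists_maximal hs
    exact ⟨m, hm, fun x hx hlt => lt_irrefl m (lt_of_lt_of_le hlt (hmax hx hlt.le))⟩
  simp only [Finset.mem_filter, Finset.mem_univ, true_and] at hm hmax
  haveI hne : Nonempty {S : Finset H.V //
      Maximal (fun T : Set H.V => H.TwoConnectedOn T Set.univ) ↑S} := by
    refine ⟨⟨m, hm, ?_⟩⟩
    intro y hy hle
    have hy' : H.TwoConnectedOn ↑y.toFinset Set.univ := by
      rwa [Set.coe_toFinset]
    have hmy : m ≤ y.toFinset := by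
      intro i hi
      exact Set.mem_toFinset.2 (hle hi)
    have hnotlt := hmax y.toFinset hy'
    have hym : y.toFinset ≤ m := by
      by_contra h
      exact hnotlt (lt_of_le_not_ge hmy h)
    intro i hi
    exact Finset.mem_coe.2 (hym (Set.mem_toFinset.2 hi))
  unfold blockCount
  exact Nat.card_pos

lemma k_univ (G : Multigraph) : G.k Finset.univ = 0 := by
  have hall : ∀ a : (G.contract (Finset.univ : Finset G.V)).V, a = none := by
    intro a
    cases a with
    | none => rfl
    | some x => exact absurd (Finset.mem_univ x.1) x.2
  haveI hE : IsEmpty {S : Finset (G.contract (Finset.univ : Finset G.V)).V //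
      Maximal (fun T : Set (G.contract (Finset.univ : Finset G.V)).V =>
        (G.contract (Finset.univ : Finset G.V)).TwoConnectedOn T Set.univ) ↑S} := by
    constructor
    rintro ⟨T, hT⟩
    have h2 := hT.1.1
    have hcard : Nat.card ↥(↑T : Set (G.contract (Finset.univ : Finset G.V)).V)
        = T.card := by
      rw [Nat.card_coe_set_eq, Set.ncard_coe_finset]
    have hle : T.card ≤ 1 := Finset.card_le_one.2 (by
      intro p hp q hq
      rw [hall p, hall q])
    omega
  unfold k blockCount
  exact Nat.card_of_isEmpty

lemma one_le_k (G : Multigraph) (hconn : G.Connected) (S : Finset G.V)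
    {a b : G.V} (ha : a ∈ S) (hb : b ∉ S) : 1 ≤ G.k S := by
  obtain ⟨g, x, y, hg, hx, hy⟩ := exists_crossing hconn S ha hb
  have hgE : ¬ ∀ v ∈ G.ends g, v ∈ S := by
    intro h
    exact hy (h y (by rw [hg]; simp))
  refine one_le_blockCount (G.contract S)
    ({none, some ⟨y, hy⟩} : Finset (G.contract S).V) ?_
  refine twoConnectedOn_pair ?_ ⟨g, hgE⟩ ?_
  · intro h; exact Option.some_ne_none _ h.symm
  · show (G.ends g).map _ = _
    rw [hg, Sym2.map_pair_eq]
    simp only [dif_pos hx, dif_neg hy]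
    rfl

end Multigraph

/-- Every 2-connected multigraph satisfying `(♥)_2` other than the 2-cycle `C₂`
(the multigraph on two vertices with two parallel edges) is a simple graph,
i.e. has no parallel edges. -/
theorem heart_two_simple (G : Multigraph) (hG : G.TwoConnected) (hH : G.Heart 2)
    (hC2 : ¬(Fintype.card G.V = 2 ∧ Fintype.card G.E = 2)) :
    ∀ e f : G.E, G.ends e = G.ends f → e = f := by
  intro e f hef
  by_contra hne
  obtain ⟨u, v, huv⟩ : ∃ u v, G.ends e = s(u, v) := Sym2.exists.1 ⟨G.ends e, rfl⟩
  have hconn : G.Connected := hG.2.1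
  rcases eq_or_ne u v with rfl | huvne
  · -- loop case
    have hcard2 : 2 ≤ Fintype.card G.V := by
      have h1 := hG.1
      rwa [Nat.card_coe_set_eq, Set.ncard_univ, Nat.card_eq_fintype_card] at h1
    obtain ⟨b, hb⟩ := Fintype.exists_ne_of_one_lt_card (by omega) u
    have hbS : b ∉ ({u} : Finset G.V) := by simpa using hb
    obtain ⟨g, x, z, hg, hx, hz⟩ :=
      Multigraph.exists_crossing hconn {u} (Finset.mem_singleton_self u) hbS
    have hxu : x = u := Finset.mem_singleton.1 hx
    subst hxu
    have hzu : z ≠ x := by simpa using hz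
    have hS2 := Multigraph.twoConnectedOn_pair (Ne.symm hzu) g hg
    have hH2 := hH {x, z} hS2
    rw [Multigraph.wSum_two] at hH2
    have heg : e ≠ g := by
      intro h
      have hss : s(x, x) = s(x, z) := by rw [← huv, h, hg]
      rw [Sym2.eq_iff] at hss
      rcases hss with ⟨-, h'⟩ | ⟨h', -⟩ <;> exact hzu h'.symm
    have hfg : f ≠ g := by
      intro h
      have hss : s(x, x) = s(x, z) := by rw [← huv, hef, h, hg]
      rw [Sym2.eq_iff] at hss
      rcases hss with ⟨-, h'⟩ | ⟨h', -⟩ <;> exact hzu h'.symm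
    have hsub : ({e, f, g} : Finset G.E) ⊆ G.edgesIn {x, z} := by
      intro i hi
      simp only [Finset.mem_insert, Finset.mem_singleton] at hi
      rw [Multigraph.mem_edgesIn]
      rcases hi with rfl | rfl | rfl
      · intro w hw; rw [huv] at hw; simp at hw; simp [hw]
      · intro w hw; rw [← hef, huv] at hw; simp at hw; simp [hw]
      · intro w hw; rw [hg] at hw; simp at hw
        rcases hw with rfl | rfl <;> simp
    have hcard3 : ({e, f, g} : Finset G.E).card = 3 := by
      rw [Finset.card_insert_of_notMem (by simp [hne, heg]),
        Finset.card_pair hfg]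
    have h3 : 3 ≤ (G.edgesIn {x, z}).card := by
      calc 3 = ({e, f, g} : Finset G.E).card := hcard3.symm
        _ ≤ _ := Finset.card_le_card hsub
    have hc : ({x, z} : Finset G.V).card = 2 := Finset.card_pair (Ne.symm hzu)
    rw [hc] at hH2
    omega
  · -- parallel non-loop case
    have hS2 := Multigraph.twoConnectedOn_pair huvne e huv
    have hH2 := hH {u, v} hS2
    have hc : ({u, v} : Finset G.V).card = 2 := Finset.card_pair huvne
    rw [Multigraph.wSum_two, hc] at hH2
    have hef2 : ({e, f} : Finset G.E) ⊆ G.edgesIn {u, v} := by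
      intro i hi
      simp only [Finset.mem_insert, Finset.mem_singleton] at hi
      rw [Multigraph.mem_edgesIn]
      rcases hi with rfl | rfl
      · intro w hw; rw [huv] at hw; simp at hw
        rcases hw with rfl | rfl <;> simp
      · intro w hw; rw [← hef, huv] at hw; simp at hw
        rcases hw with rfl | rfl <;> simp
    have h2le : 2 ≤ (G.edgesIn {u, v}).card := by
      calc 2 = ({e, f} : Finset G.E).card := (Finset.card_pair hne).symm
        _ ≤ _ := Finset.card_le_card hef2
    by_cases hfull : ({u, v} : Finset G.V) = Finset.univ
    · have hV : Fintype.card G.V = 2 := by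
        rw [← Finset.card_univ, ← hfull, hc]
      have hEall : G.edgesIn {u, v} = Finset.univ := by
        ext i
        simp [Multigraph.mem_edgesIn, hfull]
      have hkz : G.k {u, v} = 0 := by rw [hfull]; exact G.k_univ
      rw [hkz, hEall, Finset.card_univ] at hH2
      exact hC2 ⟨hV, by omega⟩
    · obtain ⟨b, -, hb⟩ := Finset.exists_of_ssubset
        (lt_of_le_of_ne (Finset.subset_univ _) hfull)
      have hk1 := G.one_le_k hconn {u, v} (show u ∈ ({u, v} : Finset G.V) by simp) hb
      omega

end
end

section
/- Let G be the δ-gluing of 2-connected multigraphs G_1 and G_2 along F_1 and F_2, with glued vertices u and v. If S is a good flat of G containing both u and v, then either V(G_1) ⊆ S or V(G_2) ⊆ S. -/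
open scoped Classical

noncomputable section

/-- If `S` is a good flat of the δ-gluing `G` of `G₁` and `G₂` containing both
glued vertices `u` and `v`, then `S` contains all of `V(G₁)` or all of `V(G₂)`. -/
theorem glue_goodFlat_contains_side (δ : ℕ) (G1 G2 : Multigraph)
    (u1 v1 : G1.V) (u2 v2 : G2.V) (F1 : Finset G1.E) (F2 : Finset G2.E)
    (hglue : Multigraph.GlueHyp δ G1 G2 u1 v1 u2 v2 F1 F2)
    (S : Finset (Multigraph.glue δ G1 G2 u1 v1 u2 v2 F1 F2).V)
    (hS : (Multigraph.glue δ G1 G2 u1 v1 u2 v2 F1 F2).GoodFlat S)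
    (hu : Sum.inl u1 ∈ S) (hv : Sum.inl v1 ∈ S) :
    (∀ x : G1.V, Sum.inl x ∈ S) ∨
    (∀ x : G2.V, Multigraph.glueVertexMap G1 G2 u1 v1 u2 v2 x ∈ S) := by
  by_contra hcon
  push_neg at hcon
  obtain ⟨⟨x1, hx1⟩, ⟨x2, hx2⟩⟩ := hcon
  have hx2u : x2 ≠ u2 := by
    intro h; subst h
    simp [Multigraph.glueVertexMap] at hx2
    exact hx2 hu
  have hx2v : x2 ≠ v2 := by
    intro h; subst h
    simp [Multigraph.glueVertexMap, hx2u] at hx2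
    exact hx2 hv
  have hx2' : (Sum.inr ⟨x2, hx2u, hx2v⟩ :
      (Multigraph.glue δ G1 G2 u1 v1 u2 v2 F1 F2).V) ∉ S := by
    simpa [Multigraph.glueVertexMap, hx2u, hx2v] using hx2
  have h2c := hS.2.2
  have hconn := h2c.2.2 none (Set.mem_univ _)
  have hreach := hconn.2 (some ⟨Sum.inl x1, hx1⟩) ⟨Set.mem_univ _, by intro h; cases (Set.mem_singleton_iff.mp h)⟩
    (some ⟨Sum.inr ⟨x2, hx2u, hx2v⟩, hx2'⟩) ⟨Set.mem_univ _, by intro h; cases (Set.mem_singleton_iff.mp h)⟩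
  -- invariant: being (the image of) a G1-vertex
  let Q : ((Multigraph.glue δ G1 G2 u1 v1 u2 v2 F1 F2).contract S).V → Prop :=
    fun w => ∃ z, ∃ hz : (Sum.inl z : (Multigraph.glue δ G1 G2 u1 v1 u2 v2 F1 F2).V) ∉ S,
      w = some ⟨Sum.inl z, hz⟩
  have hstep : ∀ x y, ((Multigraph.glue δ G1 G2 u1 v1 u2 v2 F1 F2).contract S).Step
      (Set.univ \ {none}) Set.univ x y → Q x → Q y := by
    intro x y hst hQx
    obtain ⟨hxmem, hymem, e, -, he⟩ := hst
    have hy : y ∈ ((Multigraph.glue δ G1 G2 u1 v1 u2 v2 F1 F2).contract S).ends e := by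
      rw [he]; exact (Sym2.mem_mk_right x y)
    have hx : x ∈ ((Multigraph.glue δ G1 G2 u1 v1 u2 v2 F1 F2).contract S).ends e := by
      rw [he]; exact (Sym2.mem_mk_left x y)
    have hyne : y ≠ none := fun h => hymem.2 h
    have hxne : x ≠ none := fun h => hxmem.2 h
    have hends : ((Multigraph.glue δ G1 G2 u1 v1 u2 v2 F1 F2).contract S).ends e =
        ((Multigraph.glue δ G1 G2 u1 v1 u2 v2 F1 F2).ends e.1).map
          (fun w => if h : w ∈ S then none else some ⟨w, h⟩) := rfl
    rw [hends] at hy hx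
    replace hy := Sym2.mem_map.mp hy
    replace hx := Sym2.mem_map.mp hx
    obtain ⟨a, ha, hfa⟩ := hy
    obtain ⟨c, hc, hfc⟩ := hx
    have haS : a ∉ S := by
      intro h; rw [dif_pos h] at hfa; exact hyne hfa.symm
    have hcS : c ∉ S := by
      intro h; rw [dif_pos h] at hfc; exact hxne hfc.symm
    rw [dif_neg haS] at hfa
    rw [dif_neg hcS] at hfc
    obtain ⟨e', he'⟩ :
        ∃ e' : (Multigraph.glue δ G1 G2 u1 v1 u2 v2 F1 F2).E, e' = e.1 := ⟨e.1, rfl⟩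
    rw [← he'] at ha hc
    match e' with
    | Sum.inl e1 =>
      have : a ∈ (G1.ends e1.1).map Sum.inl := ha
      replace this := Sym2.mem_map.mp this
      obtain ⟨b, -, hb⟩ := this
      exact ⟨b, hb ▸ haS, by rw [← hfa]; subst hb; rfl⟩
    | Sum.inr (Sum.inl e2) =>
      exfalso
      have : c ∈ (G2.ends e2.1).map (Multigraph.glueVertexMap G1 G2 u1 v1 u2 v2) := hc
      replace this := Sym2.mem_map.mp this
      obtain ⟨d, -, hd⟩ := this
      obtain ⟨z, hz, hxz⟩ := hQx
      rw [hxz] at hfc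
      have hcz : c = Sum.inl z := congrArg Subtype.val (Option.some_injective _ hfc)
      rw [hcz] at hd
      unfold Multigraph.glueVertexMap at hd
      by_cases hdu : d = u2
      · rw [dif_pos hdu] at hd
        rw [← hd] at hz; exact hz hu
      · by_cases hdv : d = v2
        · rw [dif_neg hdu, dif_pos hdv] at hd
          rw [← hd] at hz; exact hz hv
        · rw [dif_neg hdu, dif_neg hdv] at hd
          exact Sum.inr_ne_inl hd
    | Sum.inr (Sum.inr i) =>
      exfalso
      have : a ∈ s((Sum.inl u1 : (Multigraph.glue δ G1 G2 u1 v1 u2 v2 F1 F2).V),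
          Sum.inl v1) := ha
      replace this := Sym2.mem_iff.mp this
      rcases this with h | h
      · exact haS (h ▸ hu)
      · exact haS (h ▸ hv)
  have key : ∀ b, ((Multigraph.glue δ G1 G2 u1 v1 u2 v2 F1 F2).contract S).Reach
      (Set.univ \ {none}) Set.univ (some ⟨Sum.inl x1, hx1⟩) b → Q b := by
    intro b h
    induction h with
    | refl => exact ⟨x1, hx1, rfl⟩
    | tail _ hst ih => exact hstep _ _ hst ih
  have hQvb := key _ hreach
  obtain ⟨z, hz, hzeq⟩ := hQvb
  have := congrArg Subtype.val (Option.some_injective _ hzeq)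
  exact Sum.inr_ne_inl this

end
end
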